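/- arXiv:2009.01393 — 7 statements merged into one kernel-verified Lean document; each statement's English description precedes it below -/
import Mathlib

section
/- Let n be a positive integer, let A, B, C be real n×n matrices, and let δ > 0. Assume that the 2n×2n block matrix M₀ = [[A, B], [Bᵀ, C]] (Matrix.fromBlocks A B Bᵀ C) is symmetric and positive semidefinite, and that A is positive definite. Then the stabilized matrix M_δ = [[A, B], [Bᵀ, C + δ·I]] (Matrix.fromBlocks A B Bᵀ (C + δ•1)) is positive definite. -/
open Matrix

/-- **Lemma 3.2 (abstract form).** If the block matrix `M₀ = [[A, B], [Bᵀ, C]]` is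
symmetric positive semidefinite and `A` is positive definite, then for every `δ > 0`
the stabilized matrix `M_δ = [[A, B], [Bᵀ, C + δ·I]]` is positive definite. -/
theorem stabilized_block_matrix_posDef
    (n : ℕ) (hn : 0 < n) (A B C : Matrix (Fin n) (Fin n) ℝ) (δ : ℝ) (hδ : 0 < δ)
    (hM₀ : (Matrix.fromBlocks A B Bᵀ C).PosSemidef) (hA : A.PosDef) :
    (Matrix.fromBlocks A B Bᵀ (C + δ • (1 : Matrix (Fin n) (Fin n) ℝ))).PosDef := by
  have hsplit : Matrix.fromBlocks A B Bᵀ (C + δ • (1 : Matrix (Fin n) (Fin n) ℝ)) =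
      Matrix.fromBlocks A B Bᵀ C +
        Matrix.fromBlocks 0 0 0 (δ • (1 : Matrix (Fin n) (Fin n) ℝ)) := by
    rw [Matrix.fromBlocks_add]; simp
  rw [Matrix.posDef_iff_dotProduct_mulVec]
  constructor
  · rw [hsplit]
    refine hM₀.1.add ?_
    unfold Matrix.IsHermitian
    rw [Matrix.conjTranspose_eq_transpose_of_trivial, Matrix.fromBlocks_transpose]
    simp [Matrix.transpose_smul]
  · intro x hx
    have hq : star x ⬝ᵥ
        (Matrix.fromBlocks A B Bᵀ (C + δ • (1 : Matrix (Fin n) (Fin n) ℝ)) *ᵥ x) =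
        star x ⬝ᵥ (Matrix.fromBlocks A B Bᵀ C *ᵥ x) + δ * ((x ∘ Sum.inr) ⬝ᵥ (x ∘ Sum.inr)) := by
      rw [hsplit, Matrix.add_mulVec, dotProduct_add]
      congr 1
      have key : ∀ (u v : Fin n ⊕ Fin n → ℝ), u ⬝ᵥ v =
          (u ∘ Sum.inl) ⬝ᵥ (v ∘ Sum.inl) + (u ∘ Sum.inr) ⬝ᵥ (v ∘ Sum.inr) := by
        intro u v
        simp [dotProduct, Fintype.sum_sum_type]
      rw [Matrix.fromBlocks_mulVec, key]
      simp [Matrix.smul_mulVec, dotProduct_smul, smul_eq_mul, dotProduct,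
        Finset.mul_sum]
      exact Finset.sum_congr rfl fun i _ => by ring
    rw [hq]
    by_cases h2 : x ∘ Sum.inr = 0
    · have h1 : x ∘ Sum.inl ≠ 0 := by
        intro h1
        apply hx
        ext i; cases i with
        | inl i => exact congrFun h1 i
        | inr i => exact congrFun h2 i
      have hx' : x = Sum.elim (x ∘ Sum.inl) 0 := by
        rw [← h2]; exact (Sum.elim_comp_inl_inr x).symm
      have : star x ⬝ᵥ (Matrix.fromBlocks A B Bᵀ C *ᵥ x) =
          star (x ∘ Sum.inl) ⬝ᵥ (A *ᵥ (x ∘ Sum.inl)) := by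
        rw [hx', Matrix.fromBlocks_mulVec]
        simp [sumElim_dotProduct_sumElim]
      rw [this, h2]
      simpa using hA.dotProduct_mulVec_pos h1
    · have hpos : 0 < (x ∘ Sum.inr) ⬝ᵥ (x ∘ Sum.inr) := by
        obtain ⟨i, hi⟩ := Function.ne_iff.mp h2
        have hi' : x (Sum.inr i) ≠ 0 := by simpa using hi
        refine Finset.sum_pos' (fun j _ => mul_self_nonneg (x (Sum.inr j)))
          ⟨i, Finset.mem_univ i, mul_self_pos.mpr hi'⟩
      have h0 := hM₀.dotProduct_mulVec_nonneg x
      nlinarith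
end

section
/- Let n be a positive integer, ξ > 0 and δ > 0 real numbers, E : ℝ^(n⊕n) → ℝ a differentiable function with gradient ∇E, and let A, B, C : ℝ → (real n×n matrices) be matrix-valued functions of time such that for every t the block matrix M₀(t) = [[A(t), B(t)], [B(t)ᵀ, C(t)]] is symmetric positive semidefinite and A(t) is positive definite; set M_δ(t) = [[A(t), B(t)], [B(t)ᵀ, C(t) + δ·I]]. Let y : ℝ → ℝ^(n⊕n) be differentiable and satisfy the moving finite element system ξ • M_δ(t).mulVec(y'(t)) = -∇E(y(t)) for all t. Then for every t the function E ∘ y has derivative -ξ·⟨M_δ(t) y'(t), y'(t)⟩ at t, this derivative is ≤ 0, and it equals 0 only when y'(t) = 0. -/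
open Matrix

private lemma mfem_quadform (n : ℕ) (δ : ℝ) (hδ : 0 < δ)
    (A B C : Matrix (Fin n) (Fin n) ℝ)
    (hM₀ : (Matrix.fromBlocks A B Bᵀ C).PosSemidef) (hA : A.PosDef)
    (v : EuclideanSpace ℝ (Fin n ⊕ Fin n)) :
    0 ≤ (Matrix.fromBlocks A B Bᵀ (C + δ • (1 : Matrix (Fin n) (Fin n) ℝ))) *ᵥ v ⬝ᵥ v ∧
    ((Matrix.fromBlocks A B Bᵀ (C + δ • (1 : Matrix (Fin n) (Fin n) ℝ))) *ᵥ v ⬝ᵥ v = 0 →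
      v = 0) := by
  set v₁ := v ∘ Sum.inl
  set v₂ := v ∘ Sum.inr
  have hv : v = Sum.elim v₁ v₂ := (Sum.elim_comp_inl_inr v).symm
  have hq : (Matrix.fromBlocks A B Bᵀ (C + δ • (1 : Matrix (Fin n) (Fin n) ℝ))) *ᵥ v ⬝ᵥ v
      = ((Matrix.fromBlocks A B Bᵀ C) *ᵥ v ⬝ᵥ v) + δ * (v₂ ⬝ᵥ v₂) := by
    rw [hv, fromBlocks_mulVec, fromBlocks_mulVec, sumElim_dotProduct_sumElim,
      sumElim_dotProduct_sumElim, add_mulVec, smul_mulVec, one_mulVec]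
    simp [dotProduct_add, dotProduct_smul, smul_eq_mul]
    ring
  have h0 : 0 ≤ (Matrix.fromBlocks A B Bᵀ C) *ᵥ v ⬝ᵥ v := by
    have := hM₀.dotProduct_mulVec_nonneg (WithLp.ofLp v)
    simpa [dotProduct_comm] using this
  have h2 : 0 ≤ δ * (v₂ ⬝ᵥ v₂) :=
    mul_nonneg hδ.le (Finset.sum_nonneg fun i _ => mul_self_nonneg (v₂ i))
  constructor
  · rw [hq]; linarith
  · intro hzero
    rw [hq] at hzero
    have hz2 : δ * (v₂ ⬝ᵥ v₂) = 0 := by linarith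
    have hv₂ : v₂ = 0 := by
      rw [mul_eq_zero] at hz2
      rcases hz2 with h | h
      · exact absurd h hδ.ne'
      · exact dotProduct_self_eq_zero.mp h
    have hz0 : (Matrix.fromBlocks A B Bᵀ C) *ᵥ v ⬝ᵥ v = 0 := by linarith
    have hq0 : (Matrix.fromBlocks A B Bᵀ C) *ᵥ v ⬝ᵥ v = A *ᵥ v₁ ⬝ᵥ v₁ := by
      rw [hv, hv₂, fromBlocks_mulVec, sumElim_dotProduct_sumElim]
      simp
    have hv₁ : v₁ = 0 := by
      by_contra hne
      have := hA.dotProduct_mulVec_pos hne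
      rw [hq0] at hz0
      simp only [star_trivial] at this
      rw [dotProduct_comm] at hz0
      linarith
    apply WithLp.ofLp_injective 2
    rw [hv, hv₁, hv₂]
    ext (i | i) <;> simp

set_option maxHeartbeats 1600000 in
/-- **Theorem 4.1.** The semi-discrete moving finite element scheme
`ξ • M_δ(t) y'(t) = -∇E(y(t))`, where `M_δ(t) = [[A(t), B(t)], [B(t)ᵀ, C(t) + δ·I]]`
is the stabilized dissipation matrix (`M₀(t)` symmetric positive semidefinite, `A(t)`
positive definite), preserves the energy dissipation structure: `t ↦ E(y(t))` has
derivative `-ξ·⟨M_δ(t) y'(t), y'(t)⟩ ≤ 0`, with equality to `0` only when `y'(t) = 0`. -/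
theorem mfem_energy_dissipation
    (n : ℕ) (hn : 0 < n) (ξ δ : ℝ) (hξ : 0 < ξ) (hδ : 0 < δ)
    (E : EuclideanSpace ℝ (Fin n ⊕ Fin n) → ℝ)
    (gradE : EuclideanSpace ℝ (Fin n ⊕ Fin n) → EuclideanSpace ℝ (Fin n ⊕ Fin n))
    (hE : ∀ x, HasGradientAt E (gradE x) x)
    (A B C : ℝ → Matrix (Fin n) (Fin n) ℝ)
    (hM₀ : ∀ t, (Matrix.fromBlocks (A t) (B t) (B t)ᵀ (C t)).PosSemidef)
    (hA : ∀ t, (A t).PosDef)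
    (y : ℝ → EuclideanSpace ℝ (Fin n ⊕ Fin n)) (hy : Differentiable ℝ y)
    (hODE : ∀ t, ξ • (Matrix.fromBlocks (A t) (B t) (B t)ᵀ
        (C t + δ • (1 : Matrix (Fin n) (Fin n) ℝ))).mulVec (WithLp.ofLp (deriv y t)) = -(WithLp.ofLp (gradE (y t)))) :
    ∀ t : ℝ,
      HasDerivAt (fun s => E (y s))
        (-(ξ * ((Matrix.fromBlocks (A t) (B t) (B t)ᵀ
            (C t + δ • (1 : Matrix (Fin n) (Fin n) ℝ))).mulVec (WithLp.ofLp (deriv y t)) ⬝ᵥ WithLp.ofLp (deriv y t)))) t ∧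
      -(ξ * ((Matrix.fromBlocks (A t) (B t) (B t)ᵀ
          (C t + δ • (1 : Matrix (Fin n) (Fin n) ℝ))).mulVec (WithLp.ofLp (deriv y t)) ⬝ᵥ WithLp.ofLp (deriv y t))) ≤ 0 ∧
      (-(ξ * ((Matrix.fromBlocks (A t) (B t) (B t)ᵀ
          (C t + δ • (1 : Matrix (Fin n) (Fin n) ℝ))).mulVec (WithLp.ofLp (deriv y t)) ⬝ᵥ WithLp.ofLp (deriv y t))) = 0 →
        deriv y t = 0) := by
  intro t
  have hd : HasDerivAt y (deriv y t) t := (hy t).hasDerivAt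
  set d : EuclideanSpace ℝ (Fin n ⊕ Fin n) := deriv y t with hdEq
  obtain ⟨hpos, hzero⟩ := mfem_quadform n δ hδ (A t) (B t) (C t) (hM₀ t) (hA t) d
  have hODE' : ξ • (Matrix.fromBlocks (A t) (B t) (B t)ᵀ
      (C t + δ • (1 : Matrix (Fin n) (Fin n) ℝ))).mulVec (WithLp.ofLp d)
      = -(gradE (y t)) := by
    have h := hODE t
    exact h
  have hg : gradE (y t) = -(ξ • (Matrix.fromBlocks (A t) (B t) (B t)ᵀ
      (C t + δ • (1 : Matrix (Fin n) (Fin n) ℝ))).mulVec (WithLp.ofLp d)) := by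
    rw [hODE', neg_neg]
  have hderiv : HasDerivAt (fun s => E (y s))
      (-(ξ * ((Matrix.fromBlocks (A t) (B t) (B t)ᵀ
        (C t + δ • (1 : Matrix (Fin n) (Fin n) ℝ))).mulVec (WithLp.ofLp d)
        ⬝ᵥ (WithLp.ofLp d)))) t := by
    have hcomp := (hE (y t)).hasFDerivAt.comp_hasDerivAt t hd
    have hval : (InnerProductSpace.toDual ℝ (EuclideanSpace ℝ (Fin n ⊕ Fin n))
        (gradE (y t))) d
        = -(ξ * ((Matrix.fromBlocks (A t) (B t) (B t)ᵀ
          (C t + δ • (1 : Matrix (Fin n) (Fin n) ℝ))).mulVec (WithLp.ofLp d)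
          ⬝ᵥ (WithLp.ofLp d))) := by
      rw [InnerProductSpace.toDual_apply_apply, PiLp.inner_apply, hg]
      simp only [PiLp.inner_apply, RCLike.inner_apply, starRingEnd_apply, star_trivial,
        dotProduct, Finset.mul_sum, ← Finset.sum_neg_distrib]
      refine Finset.sum_congr rfl fun i _ => ?_
      show d i * -(ξ * (_ *ᵥ (WithLp.ofLp d)) i) = _
      ring
    exact hval ▸ hcomp
  refine ⟨hderiv, ?_, fun h => ?_⟩
  · have := mul_nonneg hξ.le hpos
    linarith
  · exact hzero ((mul_eq_zero.mp (neg_eq_zero.mp h)).resolve_left hξ.ne')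
end

section
/- Let a < b, α > 0, L0 ≥ 0, c0 ≥ 0, c1 > 0 be real numbers with α - L0·c0² ≥ c1. Let F, f : ℝ → ℝ → ℝ be continuous with ∀ x s, HasDerivAt (F x) (f x s) s, and |f x s - f x t| ≤ L0·|s - t| for all x, s, t. Let u, v : ℝ → ℝ be continuously differentiable on [a,b], set w = v - u, and define the energy E(φ) = ∫_a^b (α/2·φ'(x)² + F(x, φ(x))) dx. Assume the Poincaré inequality ∫_a^b w(x)² dx ≤ c0²·∫_a^b w'(x)² dx and the Euler–Lagrange relation ∫_a^b (α·u'(x)·w'(x) + f(x, u(x))·w(x)) dx = 0. Then E(v) - E(u) ≥ (c1/2)·∫_a^b w'(x)² dx. -/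
/-- Taylor-type lower bound for a function with Lipschitz derivative. -/
lemma taylor_lb (L0 : ℝ) (G g : ℝ → ℝ)
    (hG : ∀ s, HasDerivAt G (g s) s)
    (hLip : ∀ s t, |g s - g t| ≤ L0 * |s - t|)
    (s t : ℝ) : G t + g t * (s - t) - L0 / 2 * (s - t) ^ 2 ≤ G s := by
  set h : ℝ → ℝ := fun r => G r - g t * r + L0 / 2 * (r - t) ^ 2 with hh
  have hderiv : ∀ r, HasDerivAt h (g r - g t + L0 * (r - t)) r := by
    intro r
    have h1 : HasDerivAt (fun r : ℝ => G r - g t * r) (g r - g t * 1) r :=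
      (hG r).sub ((hasDerivAt_id r).const_mul (g t))
    have h2 : HasDerivAt (fun r : ℝ => L0 / 2 * (r - t) ^ 2)
        (L0 / 2 * (2 * (r - t) ^ 1 * 1)) r :=
      (((hasDerivAt_id r).sub_const t).pow 2).const_mul (L0 / 2)
    have := h1.add h2
    exact this.congr_deriv (by ring)
  have hd : Differentiable ℝ h := fun r => (hderiv r).differentiableAt
  have hderiv' : ∀ r, deriv h r = g r - g t + L0 * (r - t) := fun r => (hderiv r).deriv
  have hts : h t ≤ h s := by
    rcases le_total t s with hle | hle
    · have hmono : MonotoneOn h (Set.Icc t s) := by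
        apply monotoneOn_of_deriv_nonneg (convex_Icc t s) hd.continuous.continuousOn
          (hd.differentiableOn)
        intro r hr
        rw [hderiv' r]
        have hr' : t ≤ r := (interior_subset hr).1
        have h1 : |g r - g t| ≤ L0 * |r - t| := hLip r t
        rw [abs_of_nonneg (by linarith : (0:ℝ) ≤ r - t)] at h1
        have := neg_abs_le (g r - g t)
        linarith
      simpa using hmono (Set.left_mem_Icc.2 hle) (Set.right_mem_Icc.2 hle) hle
    · have hanti : AntitoneOn h (Set.Icc s t) := by
        apply antitoneOn_of_deriv_nonpos (convex_Icc s t) hd.continuous.continuousOn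
          (hd.differentiableOn)
        intro r hr
        rw [hderiv' r]
        have hr' : r ≤ t := (interior_subset hr).2
        have h1 : |g r - g t| ≤ L0 * |r - t| := hLip r t
        rw [abs_of_nonpos (by linarith : r - t ≤ (0:ℝ)), neg_sub] at h1
        have := le_abs_self (g r - g t)
        linarith
      simpa using hanti (Set.left_mem_Icc.2 hle) (Set.right_mem_Icc.2 hle) hle
  have : G t - g t * t + 0 ≤ G s - g t * s + L0 / 2 * (s - t) ^ 2 := by
    simpa [hh] using hts
  nlinarith [this]

/-- **Lower bound (4.10) in the proof of Theorem 4.3.** Under assumption (H1)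
(`α - L₀c₀² ≥ c₁ > 0`), if `u` satisfies the Euler–Lagrange relation of the energy
`E(φ) = ∫_a^b (α/2·(φ')² + F(x,φ)) dx` tested against `w = v - u`, and `w` satisfies the
Poincaré inequality with constant `c₀`, then
`E(v) - E(u) ≥ (c₁/2)·∫_a^b (w')² dx`. -/
theorem energy_excess_lower_bound
    (a b α L0 c0 c1 : ℝ) (hab : a < b) (hα : 0 < α) (hL0 : 0 ≤ L0) (hc0 : 0 ≤ c0)
    (hc1 : 0 < c1) (hH1 : c1 ≤ α - L0 * c0 ^ 2)
    (F f : ℝ → ℝ → ℝ)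
    (hF : Continuous (Function.uncurry F)) (hf : Continuous (Function.uncurry f))
    (hFf : ∀ x s, HasDerivAt (F x) (f x s) s)
    (hLip : ∀ x s t, |f x s - f x t| ≤ L0 * |s - t|)
    (u v u' v' : ℝ → ℝ)
    (hu : ∀ x ∈ Set.Icc a b, HasDerivWithinAt u (u' x) (Set.Icc a b) x)
    (hu' : ContinuousOn u' (Set.Icc a b))
    (hv : ∀ x ∈ Set.Icc a b, HasDerivWithinAt v (v' x) (Set.Icc a b) x)
    (hv' : ContinuousOn v' (Set.Icc a b))
    (hPoincare : ∫ x in a..b, (v x - u x) ^ 2 ≤ c0 ^ 2 * ∫ x in a..b, (v' x - u' x) ^ 2)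
    (hEL : (∫ x in a..b, (α * u' x * (v' x - u' x) + f x (u x) * (v x - u x))) = 0) :
    (∫ x in a..b, (α / 2 * (v' x) ^ 2 + F x (v x)))
        - (∫ x in a..b, (α / 2 * (u' x) ^ 2 + F x (u x)))
      ≥ c1 / 2 * ∫ x in a..b, (v' x - u' x) ^ 2 := by
  have hab' : a ≤ b := hab.le
  have hIcc : Set.uIcc a b = Set.Icc a b := Set.uIcc_of_le hab'
  have hcu : ContinuousOn u (Set.Icc a b) := fun x hx => (hu x hx).continuousWithinAt
  have hcv : ContinuousOn v (Set.Icc a b) := fun x hx => (hv x hx).continuousWithinAt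
  have hcFv : ContinuousOn (fun x => F x (v x)) (Set.Icc a b) :=
    hF.comp_continuousOn ((continuousOn_id).prodMk hcv)
  have hcFu : ContinuousOn (fun x => F x (u x)) (Set.Icc a b) :=
    hF.comp_continuousOn ((continuousOn_id).prodMk hcu)
  have hcfu : ContinuousOn (fun x => f x (u x)) (Set.Icc a b) :=
    hf.comp_continuousOn ((continuousOn_id).prodMk hcu)
  -- interval integrability of everything needed
  have II : ∀ g : ℝ → ℝ, ContinuousOn g (Set.Icc a b) → IntervalIntegrable g MeasureTheory.volume a b := by
    intro g hg
    exact (hg.mono (by rw [hIcc])).intervalIntegrable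
  have i_v : IntervalIntegrable (fun x => α / 2 * (v' x) ^ 2 + F x (v x)) MeasureTheory.volume a b :=
    II _ (((hv'.pow 2).const_smul (α/2)).add hcFv)
  have i_u : IntervalIntegrable (fun x => α / 2 * (u' x) ^ 2 + F x (u x)) MeasureTheory.volume a b :=
    II _ (((hu'.pow 2).const_smul (α/2)).add hcFu)
  have cw' : ContinuousOn (fun x => v' x - u' x) (Set.Icc a b) := hv'.sub hu'
  have cw : ContinuousOn (fun x => v x - u x) (Set.Icc a b) := hcv.sub hcu
  have i_w'sq : IntervalIntegrable (fun x => (v' x - u' x) ^ 2) MeasureTheory.volume a b :=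
    II _ (cw'.pow 2)
  have i_wsq : IntervalIntegrable (fun x => (v x - u x) ^ 2) MeasureTheory.volume a b :=
    II _ (cw.pow 2)
  have i_EL : IntervalIntegrable (fun x => α * u' x * (v' x - u' x) + f x (u x) * (v x - u x))
      MeasureTheory.volume a b :=
    II _ (((hu'.const_smul α).mul cw').add (hcfu.mul cw))
  -- pointwise lower bound on the difference of integrands
  have hptwise : ∀ x ∈ Set.Icc a b,
      α / 2 * (v' x - u' x) ^ 2
        + (α * u' x * (v' x - u' x) + f x (u x) * (v x - u x))
        - L0 / 2 * (v x - u x) ^ 2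
      ≤ (α / 2 * (v' x) ^ 2 + F x (v x)) - (α / 2 * (u' x) ^ 2 + F x (u x)) := by
    intro x hx
    have htl := taylor_lb L0 (F x) (f x) (hFf x) (hLip x) (v x) (u x)
    nlinarith [htl]
  -- integral of the lower bound
  have hbound :
      (∫ x in a..b, (α / 2 * (v' x - u' x) ^ 2
          + (α * u' x * (v' x - u' x) + f x (u x) * (v x - u x))
          - L0 / 2 * (v x - u x) ^ 2))
      ≤ (∫ x in a..b, ((α / 2 * (v' x) ^ 2 + F x (v x)) - (α / 2 * (u' x) ^ 2 + F x (u x)))) := by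
    apply intervalIntegral.integral_mono_on hab'
    · exact ((i_w'sq.const_mul (α/2)).add i_EL).sub (i_wsq.const_mul (L0/2))
    · exact i_v.sub i_u
    · exact hptwise
  rw [intervalIntegral.integral_sub i_v i_u] at hbound
  have hsplit :
      (∫ x in a..b, (α / 2 * (v' x - u' x) ^ 2
          + (α * u' x * (v' x - u' x) + f x (u x) * (v x - u x))
          - L0 / 2 * (v x - u x) ^ 2))
      = α / 2 * (∫ x in a..b, (v' x - u' x) ^ 2)
        + (∫ x in a..b, (α * u' x * (v' x - u' x) + f x (u x) * (v x - u x)))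
        - L0 / 2 * (∫ x in a..b, (v x - u x) ^ 2) := by
    rw [intervalIntegral.integral_sub ((i_w'sq.const_mul (α/2)).add i_EL) (i_wsq.const_mul (L0/2)),
      intervalIntegral.integral_add (i_w'sq.const_mul (α/2)) i_EL,
      intervalIntegral.integral_const_mul, intervalIntegral.integral_const_mul]
  rw [hsplit, hEL] at hbound
  have hI1 : 0 ≤ ∫ x in a..b, (v' x - u' x) ^ 2 :=
    intervalIntegral.integral_nonneg hab' (fun x _ => sq_nonneg _)
  set I1 := ∫ x in a..b, (v' x - u' x) ^ 2
  set I2 := ∫ x in a..b, (v x - u x) ^ 2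
  have : c1 / 2 * I1 ≤ α / 2 * I1 + 0 - L0 / 2 * I2 := by nlinarith
  linarith
end

section
/- Let a < b, α > 0, L0 ≥ 0 be real numbers. Let F, f : ℝ → ℝ → ℝ be continuous with ∀ x s, HasDerivAt (F x) (f x s) s, and |f x s - f x t| ≤ L0·|s - t| for all x, s, t. Let u, v : ℝ → ℝ be continuously differentiable on [a,b], set w = v - u, and define E(φ) = ∫_a^b (α/2·φ'(x)² + F(x, φ(x))) dx. Assume the Euler–Lagrange relation ∫_a^b (α·u'(x)·w'(x) + f(x, u(x))·w(x)) dx = 0. Then E(v) - E(u) ≤ (α/2)·∫_a^b w'(x)² dx + (L0/2)·∫_a^b w(x)² dx. -/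
/-- Taylor-type upper bound for a function with Lipschitz derivative. -/
lemma taylor_upper_bound (L0 : ℝ) (F f : ℝ → ℝ) (hf : Continuous f)
    (hFf : ∀ s, HasDerivAt F (f s) s)
    (hLip : ∀ s t, |f s - f t| ≤ L0 * |s - t|) (s1 s2 : ℝ) :
    F s2 - F s1 - f s1 * (s2 - s1) ≤ L0 / 2 * (s2 - s1) ^ 2 := by
  set d := s2 - s1 with hd
  have hg : ∀ t ∈ Set.uIcc (0:ℝ) 1,
      HasDerivAt (fun t => F (s1 + t * d)) (f (s1 + t * d) * d) t := by
    intro t _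
    have h1 : HasDerivAt (fun t : ℝ => s1 + t * d) d t := by
      simpa using ((hasDerivAt_id t).mul_const d).const_add s1
    exact (hFf (s1 + t * d)).comp t h1
  have hcont : Continuous (fun t : ℝ => f (s1 + t * d) * d) := by
    exact (hf.comp (by continuity)).mul continuous_const
  have hint := intervalIntegral.integral_eq_sub_of_hasDerivAt hg
    (hcont.intervalIntegrable 0 1)
  simp only [one_mul, zero_mul, add_zero] at hint
  have hs2 : s1 + d = s2 := by ring
  rw [hs2] at hint
  have hmono : (∫ t in (0:ℝ)..1, (f (s1 + t * d) * d - f s1 * d))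
      ≤ ∫ t in (0:ℝ)..1, L0 * t * d ^ 2 := by
    apply intervalIntegral.integral_mono_on zero_le_one
    · exact ((hcont.sub continuous_const).intervalIntegrable 0 1)
    · exact (by continuity : Continuous fun t : ℝ => L0 * t * d ^ 2).intervalIntegrable 0 1
    · intro t ht
      have h1 : f (s1 + t * d) * d - f s1 * d = (f (s1 + t * d) - f s1) * d := by ring
      rw [h1]
      calc (f (s1 + t * d) - f s1) * d ≤ |(f (s1 + t * d) - f s1) * d| := le_abs_self _
        _ = |f (s1 + t * d) - f s1| * |d| := abs_mul _ _
        _ ≤ (L0 * |s1 + t * d - s1|) * |d| := by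
            apply mul_le_mul_of_nonneg_right (hLip _ _) (abs_nonneg _)
        _ = L0 * t * d ^ 2 := by
            have : |s1 + t * d - s1| = t * |d| := by
              rw [show s1 + t * d - s1 = t * d by ring, abs_mul, abs_of_nonneg ht.1]
            rw [this]; rw [show L0 * (t * |d|) * |d| = L0 * t * |d| ^ 2 from by ring, sq_abs]
  have hsub : (∫ t in (0:ℝ)..1, (f (s1 + t * d) * d - f s1 * d))
      = F s2 - F s1 - f s1 * d := by
    rw [intervalIntegral.integral_sub (hcont.intervalIntegrable 0 1)
      (intervalIntegrable_const), hint]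
    simp
  have hval : (∫ t in (0:ℝ)..1, L0 * t * d ^ 2) = L0 / 2 * d ^ 2 := by
    have : (fun t : ℝ => L0 * t * d ^ 2) = fun t : ℝ => t * (L0 * d ^ 2) := by
      funext t; ring
    rw [this, intervalIntegral.integral_mul_const, integral_id]
    ring
  rw [hsub, hval] at hmono
  exact hmono

/-- **Upper bound in the proof of Theorem 4.3.** If `u` satisfies the Euler–Lagrange
relation of the energy `E(φ) = ∫_a^b (α/2·(φ')² + F(x,φ)) dx` tested against `w = v - u`,
then `E(v) - E(u) ≤ (α/2)·∫_a^b (w')² dx + (L₀/2)·∫_a^b w² dx`. -/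
theorem energy_excess_upper_bound
    (a b α L0 : ℝ) (hab : a < b) (hα : 0 < α) (hL0 : 0 ≤ L0)
    (F f : ℝ → ℝ → ℝ)
    (hF : Continuous (Function.uncurry F)) (hf : Continuous (Function.uncurry f))
    (hFf : ∀ x s, HasDerivAt (F x) (f x s) s)
    (hLip : ∀ x s t, |f x s - f x t| ≤ L0 * |s - t|)
    (u v u' v' : ℝ → ℝ)
    (hu : ∀ x ∈ Set.Icc a b, HasDerivWithinAt u (u' x) (Set.Icc a b) x)
    (hu' : ContinuousOn u' (Set.Icc a b))
    (hv : ∀ x ∈ Set.Icc a b, HasDerivWithinAt v (v' x) (Set.Icc a b) x)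
    (hv' : ContinuousOn v' (Set.Icc a b))
    (hEL : (∫ x in a..b, (α * u' x * (v' x - u' x) + f x (u x) * (v x - u x))) = 0) :
    (∫ x in a..b, (α / 2 * (v' x) ^ 2 + F x (v x)))
        - (∫ x in a..b, (α / 2 * (u' x) ^ 2 + F x (u x)))
      ≤ α / 2 * (∫ x in a..b, (v' x - u' x) ^ 2)
        + L0 / 2 * ∫ x in a..b, (v x - u x) ^ 2 := by
  have hab' : a ≤ b := hab.le
  have hIcc : Set.uIcc a b = Set.Icc a b := Set.uIcc_of_le hab'
  have hUc : ContinuousOn u (Set.Icc a b) := fun x hx => (hu x hx).continuousWithinAt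
  have hVc : ContinuousOn v (Set.Icc a b) := fun x hx => (hv x hx).continuousWithinAt
  have hFu : ContinuousOn (fun x => F x (u x)) (Set.Icc a b) :=
    (hF.comp_continuousOn (continuousOn_id.prodMk hUc) : ContinuousOn (Function.uncurry F ∘ fun x => (id x, u x)) _)
  have hFv : ContinuousOn (fun x => F x (v x)) (Set.Icc a b) :=
    (hF.comp_continuousOn (continuousOn_id.prodMk hVc) : ContinuousOn (Function.uncurry F ∘ fun x => (id x, v x)) _)
  have hfu : ContinuousOn (fun x => f x (u x)) (Set.Icc a b) :=
    (hf.comp_continuousOn (continuousOn_id.prodMk hUc) : ContinuousOn (Function.uncurry f ∘ fun x => (id x, u x)) _)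
  -- integrability
  have mkI : ∀ {g : ℝ → ℝ}, ContinuousOn g (Set.Icc a b) → IntervalIntegrable g MeasureTheory.volume a b := by
    intro g hg
    exact (hIcc ▸ hg : ContinuousOn g (Set.uIcc a b)).intervalIntegrable
  have hA : IntervalIntegrable (fun x => α / 2 * (v' x) ^ 2 + F x (v x)) MeasureTheory.volume a b :=
    mkI (((continuousOn_const.mul (hv'.pow 2))).add hFv)
  have hB : IntervalIntegrable (fun x => α / 2 * (u' x) ^ 2 + F x (u x)) MeasureTheory.volume a b :=
    mkI (((continuousOn_const.mul (hu'.pow 2))).add hFu)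
  have hEl : IntervalIntegrable (fun x => α * u' x * (v' x - u' x) + f x (u x) * (v x - u x)) MeasureTheory.volume a b :=
    mkI (((continuousOn_const.mul hu').mul (hv'.sub hu')).add (hfu.mul (hVc.sub hUc)))
  have hW' : IntervalIntegrable (fun x => α / 2 * (v' x - u' x) ^ 2) MeasureTheory.volume a b :=
    mkI (continuousOn_const.mul ((hv'.sub hu').pow 2))
  have hR : IntervalIntegrable (fun x => F x (v x) - F x (u x) - f x (u x) * (v x - u x)) MeasureTheory.volume a b :=
    mkI ((hFv.sub hFu).sub (hfu.mul (hVc.sub hUc)))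
  have hW2 : IntervalIntegrable (fun x => L0 / 2 * (v x - u x) ^ 2) MeasureTheory.volume a b :=
    mkI (continuousOn_const.mul ((hVc.sub hUc).pow 2))
  have hsplit :
      (∫ x in a..b, (α / 2 * (v' x) ^ 2 + F x (v x)))
        - (∫ x in a..b, (α / 2 * (u' x) ^ 2 + F x (u x)))
      = (∫ x in a..b, (α * u' x * (v' x - u' x) + f x (u x) * (v x - u x)))
        + (∫ x in a..b, α / 2 * (v' x - u' x) ^ 2)
        + (∫ x in a..b, (F x (v x) - F x (u x) - f x (u x) * (v x - u x))) := by
    rw [← intervalIntegral.integral_sub hA hB, ← intervalIntegral.integral_add hEl hW',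
      ← intervalIntegral.integral_add (hEl.add hW') hR]
    congr 1
    funext x
    ring
  have hRle : (∫ x in a..b, (F x (v x) - F x (u x) - f x (u x) * (v x - u x)))
      ≤ ∫ x in a..b, L0 / 2 * (v x - u x) ^ 2 := by
    apply intervalIntegral.integral_mono_on hab' hR hW2
    intro x _
    exact taylor_upper_bound L0 (F x) (f x)
      (hf.comp (Continuous.prodMk_right x)) (hFf x) (hLip x) (u x) (v x)
  rw [hsplit, hEL, zero_add]
  rw [intervalIntegral.integral_const_mul (α / 2), intervalIntegral.integral_const_mul (L0 / 2)] at *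
  gcongr
end

section
/- Let a < b, α > 0, L0 ≥ 0, c0 ≥ 0, c1 > 0 be real numbers with α - L0·c0² ≥ c1. Let f : ℝ → ℝ → ℝ be continuous with |f x s - f x t| ≤ L0·|s - t| for all x, s, t. Let u, v : ℝ → ℝ be continuously differentiable on [a,b] with u(a) = v(a), set w = u - v, and assume the Poincaré inequality ∫_a^b w(x)² dx ≤ c0²·∫_a^b w'(x)² dx. If both u and v satisfy the weak Euler–Lagrange equation tested against w, i.e., ∫_a^b (α·u'(x)·w'(x) + f(x, u(x))·w(x)) dx = 0 and ∫_a^b (α·v'(x)·w'(x) + f(x, v(x))·w(x)) dx = 0, then u(x) = v(x) for all x ∈ [a,b]. -/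
open MeasureTheory intervalIntegral

/-- A function continuous on `[a,b]` that vanishes a.e. on `(a,b]` vanishes everywhere
on `[a,b]`. -/
lemma aux_ae_zero_of_continuousOn (a b : ℝ) (hab : a < b) (g : ℝ → ℝ)
    (hg : ContinuousOn g (Set.Icc a b))
    (hae : ∀ᵐ y ∂(volume.restrict (Set.Ioc a b)), g y = 0) :
    ∀ x ∈ Set.Icc a b, g x = 0 := by
  intro x hx
  by_contra hne
  have hcw := hg x hx
  rw [Metric.continuousWithinAt_iff] at hcw
  obtain ⟨δ, hδ, hball⟩ := hcw (|g x|) (abs_pos.mpr hne)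
  set c := max a (x - δ) with hc
  set d := min b (x + δ) with hd
  have hcd : c < d := by
    have h1 := hx.1; have h2 := hx.2
    simp only [hc, hd, lt_min_iff, max_lt_iff]
    constructor
    · exact ⟨hab, by linarith⟩
    · exact ⟨by linarith, by linarith⟩
  have hsub : Set.Ioo c d ⊆ {y | g y ≠ 0} := by
    intro y hy
    have hyI : y ∈ Set.Icc a b :=
      ⟨le_of_lt (lt_of_le_of_lt (le_max_left _ _) hy.1),
        le_of_lt (lt_of_lt_of_le hy.2 (min_le_left _ _))⟩
    have hyd : dist y x < δ := by
      rw [Real.dist_eq, abs_lt]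
      constructor
      · have := lt_of_le_of_lt (le_max_right a (x - δ)) hy.1; linarith
      · have := lt_of_lt_of_le hy.2 (min_le_right b (x + δ)); linarith
    have := hball hyI hyd
    intro h0
    rw [h0] at this
    simp [Real.dist_eq, abs_sub_comm] at this
  have hsub2 : Set.Ioo c d ⊆ Set.Ioc a b := by
    intro y hy
    exact ⟨lt_of_le_of_lt (le_max_left _ _) hy.1,
      le_of_lt (lt_of_lt_of_le hy.2 (min_le_left _ _))⟩
  have hnull : volume.restrict (Set.Ioc a b) {y | g y ≠ 0} = 0 := by
    rw [ae_iff] at hae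
    exact hae
  have hmeas : volume (Set.Ioo c d) = 0 := by
    have h1 : volume (Set.Ioo c d) ≤ volume.restrict (Set.Ioc a b) {y | g y ≠ 0} := by
      rw [Measure.restrict_apply₀']
      · exact measure_mono (Set.subset_inter hsub hsub2)
      · exact measurableSet_Ioc.nullMeasurableSet
    rw [hnull] at h1
    exact le_antisymm h1 zero_le
  rw [Real.volume_Ioo] at hmeas
  have : d - c ≤ 0 := by
    by_contra hpos
    push_neg at hpos
    rw [ENNReal.ofReal_eq_zero] at hmeas
    linarith
  linarith

/-- **Uniqueness of the stationary solution under (H1).** If `u` and `v` are continuously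
differentiable on `[a,b]`, agree at `a`, the difference `w = u - v` satisfies the Poincaré
inequality with constant `c₀`, `α - L₀c₀² ≥ c₁ > 0`, and both `u` and `v` satisfy the weak
Euler–Lagrange equation tested against `w`, then `u = v` on `[a,b]`. -/
theorem stationary_solution_unique
    (a b α L0 c0 c1 : ℝ) (hab : a < b) (hα : 0 < α) (hL0 : 0 ≤ L0) (hc0 : 0 ≤ c0)
    (hc1 : 0 < c1) (hH1 : c1 ≤ α - L0 * c0 ^ 2)
    (f : ℝ → ℝ → ℝ) (hf : Continuous (Function.uncurry f))
    (hLip : ∀ x s t, |f x s - f x t| ≤ L0 * |s - t|)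
    (u v u' v' : ℝ → ℝ)
    (hu : ∀ x ∈ Set.Icc a b, HasDerivWithinAt u (u' x) (Set.Icc a b) x)
    (hu' : ContinuousOn u' (Set.Icc a b))
    (hv : ∀ x ∈ Set.Icc a b, HasDerivWithinAt v (v' x) (Set.Icc a b) x)
    (hv' : ContinuousOn v' (Set.Icc a b))
    (hbc : u a = v a)
    (hPoincare : ∫ x in a..b, (u x - v x) ^ 2 ≤ c0 ^ 2 * ∫ x in a..b, (u' x - v' x) ^ 2)
    (hELu : (∫ x in a..b, (α * u' x * (u' x - v' x) + f x (u x) * (u x - v x))) = 0)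
    (hELv : (∫ x in a..b, (α * v' x * (u' x - v' x) + f x (v x) * (u x - v x))) = 0) :
    ∀ x ∈ Set.Icc a b, u x = v x := by
  have hab' : a ≤ b := hab.le
  have huIcc : Set.uIcc a b = Set.Icc a b := Set.uIcc_of_le hab'
  -- continuity of u, v on [a,b]
  have hucont : ContinuousOn u (Set.Icc a b) := fun x hx => (hu x hx).continuousWithinAt
  have hvcont : ContinuousOn v (Set.Icc a b) := fun x hx => (hv x hx).continuousWithinAt
  have hfu : ContinuousOn (fun x => f x (u x)) (Set.Icc a b) :=
    by have := hf.comp_continuousOn (continuousOn_id.prodMk hucont); exact this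
  have hfv : ContinuousOn (fun x => f x (v x)) (Set.Icc a b) :=
    by have := hf.comp_continuousOn (continuousOn_id.prodMk hvcont); exact this
  have hwcont : ContinuousOn (fun x => u x - v x) (Set.Icc a b) := hucont.sub hvcont
  have hw'cont : ContinuousOn (fun x => u' x - v' x) (Set.Icc a b) := hu'.sub hv'
  -- interval integrability of everything we need
  have mkInt : ∀ {h : ℝ → ℝ}, ContinuousOn h (Set.Icc a b) →
      IntervalIntegrable h volume a b := fun hh =>
    ContinuousOn.intervalIntegrable (by rw [huIcc]; exact hh)
  have hIA : IntervalIntegrable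
      (fun x => α * u' x * (u' x - v' x) + f x (u x) * (u x - v x)) volume a b :=
    mkInt (((continuousOn_const.mul hu').mul hw'cont).add (hfu.mul hwcont))
  have hIB : IntervalIntegrable
      (fun x => α * v' x * (u' x - v' x) + f x (v x) * (u x - v x)) volume a b :=
    mkInt (((continuousOn_const.mul hv').mul hw'cont).add (hfv.mul hwcont))
  have hIw2 : IntervalIntegrable (fun x => (u x - v x) ^ 2) volume a b :=
    mkInt (hwcont.pow 2)
  have hIw'2 : IntervalIntegrable (fun x => (u' x - v' x) ^ 2) volume a b :=
    mkInt (hw'cont.pow 2)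
  have hIaw'2 : IntervalIntegrable (fun x => α * (u' x - v' x) ^ 2) volume a b :=
    mkInt (continuousOn_const.mul (hw'cont.pow 2))
  have hIfw : IntervalIntegrable
      (fun x => (f x (u x) - f x (v x)) * (u x - v x)) volume a b :=
    mkInt ((hfu.sub hfv).mul hwcont)
  -- subtract the two EL identities
  have hsub : (∫ x in a..b,
      (α * (u' x - v' x) ^ 2 + (f x (u x) - f x (v x)) * (u x - v x))) = 0 := by
    have h := intervalIntegral.integral_sub hIA hIB
    rw [hELu, hELv, sub_zero] at h
    rw [← h]
    apply intervalIntegral.integral_congr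
    intro x _
    ring
  -- split the integral
  have hsplit : (∫ x in a..b, α * (u' x - v' x) ^ 2)
      = - ∫ x in a..b, (f x (u x) - f x (v x)) * (u x - v x) := by
    have h := intervalIntegral.integral_add hIaw'2 hIfw
    rw [hsub] at h
    linarith [h]
  -- pointwise bound: -(f u - f v) w ≤ L0 w²
  have hpt : ∀ x ∈ Set.Icc a b,
      -((f x (u x) - f x (v x)) * (u x - v x)) ≤ L0 * (u x - v x) ^ 2 := by
    intro x _
    have h1 : -((f x (u x) - f x (v x)) * (u x - v x))
        ≤ |f x (u x) - f x (v x)| * |u x - v x| := by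
      rw [← abs_mul]
      exact neg_le_abs _
    have h2 : |f x (u x) - f x (v x)| * |u x - v x|
        ≤ (L0 * |u x - v x|) * |u x - v x| :=
      mul_le_mul_of_nonneg_right (hLip x (u x) (v x)) (abs_nonneg _)
    have h3 : (L0 * |u x - v x|) * |u x - v x| = L0 * (u x - v x) ^ 2 := by
      rw [mul_assoc, ← abs_mul, abs_mul_self]; ring
    linarith
  -- integrate the bound
  have hmono : (∫ x in a..b, -((f x (u x) - f x (v x)) * (u x - v x)))
      ≤ ∫ x in a..b, L0 * (u x - v x) ^ 2 := by
    apply intervalIntegral.integral_mono_on hab' hIfw.neg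
      (mkInt (continuousOn_const.mul (hwcont.pow 2)))
    exact hpt
  have hI1nn : 0 ≤ ∫ x in a..b, (u' x - v' x) ^ 2 :=
    intervalIntegral.integral_nonneg hab' (fun x _ => sq_nonneg _)
  have hI0nn : 0 ≤ ∫ x in a..b, (u x - v x) ^ 2 :=
    intervalIntegral.integral_nonneg hab' (fun x _ => sq_nonneg _)
  set I1 := ∫ x in a..b, (u' x - v' x) ^ 2 with hI1def
  set I0 := ∫ x in a..b, (u x - v x) ^ 2 with hI0def
  have hαI1 : α * I1 ≤ L0 * I0 := by
    have e1 : (∫ x in a..b, α * (u' x - v' x) ^ 2) = α * I1 :=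
      intervalIntegral.integral_const_mul α _
    have e2 : (∫ x in a..b, L0 * (u x - v x) ^ 2) = L0 * I0 :=
      intervalIntegral.integral_const_mul L0 _
    have e3 : (∫ x in a..b, -((f x (u x) - f x (v x)) * (u x - v x)))
        = - ∫ x in a..b, (f x (u x) - f x (v x)) * (u x - v x) :=
      intervalIntegral.integral_neg
    rw [e1] at hsplit
    rw [e3, e2] at hmono
    linarith
  have hchain : α * I1 ≤ L0 * (c0 ^ 2 * I1) := by
    calc α * I1 ≤ L0 * I0 := hαI1
    _ ≤ L0 * (c0 ^ 2 * I1) := mul_le_mul_of_nonneg_left hPoincare hL0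
  have hI1zero : I1 = 0 := by
    have : c1 * I1 ≤ (α - L0 * c0 ^ 2) * I1 :=
      mul_le_mul_of_nonneg_right hH1 hI1nn
    nlinarith
  have hI0zero : I0 = 0 := by
    have : I0 ≤ c0 ^ 2 * I1 := hPoincare
    rw [hI1zero] at this
    linarith [hI0nn, this]
  -- from ∫ w² = 0 deduce w² = 0 a.e. on (a,b]
  have hae : ∀ᵐ y ∂(volume.restrict (Set.Ioc a b)), (fun x => (u x - v x) ^ 2) y = 0 := by
    have h := (intervalIntegral.integral_eq_zero_iff_of_le_of_nonneg_ae hab'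
      (Filter.Eventually.of_forall fun x => sq_nonneg (u x - v x)) hIw2).mp hI0zero
    exact h
  have hzero := aux_ae_zero_of_continuousOn a b hab (fun x => (u x - v x) ^ 2)
    (hwcont.pow 2) hae
  intro x hx
  have := hzero x hx
  have : (u x - v x) ^ 2 = 0 := this
  have := pow_eq_zero_iff (n := 2) (by norm_num) |>.mp this
  linarith
end

section
/- Let a < b, α > 0, L0 ≥ 0, c0 ≥ 0, c1 > 0 be real numbers with α - L0·c0² ≥ c1. Let F, f : ℝ → ℝ → ℝ be continuous with ∀ x s, HasDerivAt (F x) (f x s) s, and |f x s - f x t| ≤ L0·|s - t| for all x, s, t; define E(φ) = ∫_a^b (α/2·φ'(x)² + F(x, φ(x))) dx for φ continuously differentiable on [a,b]. Let u : ℝ → ℝ be continuously differentiable on [a,b], and let S be a set of functions, each continuously differentiable on [a,b], such that for every v ∈ S the difference w = v - u satisfies the Poincaré inequality ∫_a^b w² dx ≤ c0²·∫_a^b (w')² dx and the Euler–Lagrange relation ∫_a^b (α·u'·w' + f(x,u)·w) dx = 0. If u_h ∈ S is a global minimizer of E over S (E(u_h) ≤ E(v) for all v ∈ S), then for every v ∈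 S: ∫_a^b ((u - u_h)'(x))² dx ≤ ((α + L0·c0²)/c1)·∫_a^b ((u - v)'(x))² dx. -/
open intervalIntegral Set

/-- Quadratic Taylor remainder bound for a function with Lipschitz derivative. -/
lemma taylor_quad_bound (L0 : ℝ) (G g : ℝ → ℝ) (hg : Continuous g)
    (hGg : ∀ s, HasDerivAt G (g s) s)
    (hLip : ∀ s t, |g s - g t| ≤ L0 * |s - t|) (s t : ℝ) :
    |G s - G t - g t * (s - t)| ≤ L0 / 2 * (s - t) ^ 2 := by
  set h : ℝ → ℝ := fun θ => G (t + θ * (s - t)) - θ * (g t * (s - t)) with hh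
  have hd : ∀ θ : ℝ, HasDerivAt h
      (g (t + θ * (s - t)) * (s - t) - g t * (s - t)) θ := by
    intro θ
    have h1 : HasDerivAt (fun θ : ℝ => t + θ * (s - t)) (s - t) θ := by
      simpa using ((hasDerivAt_id θ).mul_const (s - t)).const_add t
    have h2 := (hGg (t + θ * (s - t))).comp θ h1
    have h3 := h2.sub ((hasDerivAt_id θ).mul_const (g t * (s - t)))
    rw [one_mul] at h3
    exact h3
  have hcont : Continuous fun θ : ℝ => g (t + θ * (s - t)) * (s - t) - g t * (s - t) := by
    fun_prop
  have hint : IntervalIntegrable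
      (fun θ : ℝ => g (t + θ * (s - t)) * (s - t) - g t * (s - t))
      MeasureTheory.volume 0 1 := hcont.intervalIntegrable _ _
  have hftc : (∫ θ in (0:ℝ)..1, (g (t + θ * (s - t)) * (s - t) - g t * (s - t)))
      = h 1 - h 0 :=
    intervalIntegral.integral_eq_sub_of_hasDerivAt (fun θ _ => hd θ) hint
  have h10 : h 1 - h 0 = G s - G t - g t * (s - t) := by
    simp only [hh]; ring_nf
  have hb : ∀ θ ∈ Icc (0:ℝ) 1,
      |g (t + θ * (s - t)) * (s - t) - g t * (s - t)| ≤ L0 * (s - t) ^ 2 * θ := by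
    intro θ hθ
    have := hLip (t + θ * (s - t)) t
    have h1 : |g (t + θ * (s - t)) - g t| ≤ L0 * (θ * |s - t|) := by
      simpa [abs_mul, abs_of_nonneg hθ.1] using this
    calc |g (t + θ * (s - t)) * (s - t) - g t * (s - t)|
        = |g (t + θ * (s - t)) - g t| * |s - t| := by rw [← abs_mul]; ring_nf
      _ ≤ L0 * (θ * |s - t|) * |s - t| := by
          exact mul_le_mul_of_nonneg_right h1 (abs_nonneg _)
      _ = L0 * (s - t) ^ 2 * θ := by rw [← sq_abs]; ring
  calc |G s - G t - g t * (s - t)|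
      = |∫ θ in (0:ℝ)..1, (g (t + θ * (s - t)) * (s - t) - g t * (s - t))| := by
        rw [hftc, h10]
    _ ≤ ∫ θ in (0:ℝ)..1, |g (t + θ * (s - t)) * (s - t) - g t * (s - t)| :=
        intervalIntegral.abs_integral_le_integral_abs zero_le_one
    _ ≤ ∫ θ in (0:ℝ)..1, L0 * (s - t) ^ 2 * θ := by
        apply intervalIntegral.integral_mono_on zero_le_one
          (hcont.abs.intervalIntegrable _ _)
          ((continuous_const.mul continuous_id).intervalIntegrable _ _) hb
    _ = L0 / 2 * (s - t) ^ 2 := by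
        rw [intervalIntegral.integral_const_mul, integral_id]; ring

/-- **Quasi-optimality (Theorem 4.3).** Under assumption (H1) (`α - L₀c₀² ≥ c₁ > 0`),
if every `v` in the discretization set `S` satisfies the Poincaré inequality and the
Euler–Lagrange relation of the stationary solution `u` tested against `v - u`, then a
global minimizer `u_h` of the energy `E(φ) = ∫_a^b (α/2·(φ')² + F(x,φ)) dx` over `S`
approximates `u` in the `H¹`-seminorm up to the factor `(α + L₀c₀²)/c₁` as well as the
best element of `S`. -/
theorem global_minimizer_quasi_optimal
    (a b α L0 c0 c1 : ℝ) (hab : a < b) (hα : 0 < α) (hL0 : 0 ≤ L0) (hc0 : 0 ≤ c0)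
    (hc1 : 0 < c1) (hH1 : c1 ≤ α - L0 * c0 ^ 2)
    (F f : ℝ → ℝ → ℝ)
    (hF : Continuous (Function.uncurry F)) (hf : Continuous (Function.uncurry f))
    (hFf : ∀ x s, HasDerivAt (F x) (f x s) s)
    (hLip : ∀ x s t, |f x s - f x t| ≤ L0 * |s - t|)
    (u : ℝ → ℝ) (hu : ContDiffOn ℝ 1 u (Set.Icc a b))
    (S : Set (ℝ → ℝ)) (hS : ∀ v ∈ S, ContDiffOn ℝ 1 v (Set.Icc a b))
    (hPoincare : ∀ v ∈ S,
      (∫ x in a..b, (v x - u x) ^ 2) ≤ c0 ^ 2 *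
        ∫ x in a..b,
          (derivWithin v (Set.Icc a b) x - derivWithin u (Set.Icc a b) x) ^ 2)
    (hEL : ∀ v ∈ S,
      (∫ x in a..b,
        (α * derivWithin u (Set.Icc a b) x
            * (derivWithin v (Set.Icc a b) x - derivWithin u (Set.Icc a b) x)
          + f x (u x) * (v x - u x))) = 0)
    (uh : ℝ → ℝ) (huh : uh ∈ S)
    (hmin : ∀ v ∈ S,
      (∫ x in a..b, (α / 2 * (derivWithin uh (Set.Icc a b) x) ^ 2 + F x (uh x)))
        ≤ ∫ x in a..b, (α / 2 * (derivWithin v (Set.Icc a b) x) ^ 2 + F x (v x))) :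
    ∀ v ∈ S,
      (∫ x in a..b, (derivWithin u (Set.Icc a b) x - derivWithin uh (Set.Icc a b) x) ^ 2)
        ≤ (α + L0 * c0 ^ 2) / c1 *
          ∫ x in a..b, (derivWithin u (Set.Icc a b) x - derivWithin v (Set.Icc a b) x) ^ 2 := by
  intro v hv
  have hab' : a ≤ b := hab.le
  have hIcc : Set.uIcc a b = Set.Icc a b := Set.uIcc_of_le hab'
  have hud : UniqueDiffOn ℝ (Set.Icc a b) := uniqueDiffOn_Icc hab
  set D : (ℝ → ℝ) → ℝ → ℝ := fun φ => derivWithin φ (Set.Icc a b) with hD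
  -- continuity facts
  have hcontD : ∀ φ : ℝ → ℝ, ContDiffOn ℝ 1 φ (Set.Icc a b) → ContinuousOn (D φ) (Set.Icc a b) :=
    fun φ h => h.continuousOn_derivWithin hud le_rfl
  have hcontφ : ∀ φ : ℝ → ℝ, ContDiffOn ℝ 1 φ (Set.Icc a b) → ContinuousOn φ (Set.Icc a b) :=
    fun φ h => ContDiffOn.continuousOn h
  have hcontF : ∀ φ : ℝ → ℝ, ContinuousOn φ (Set.Icc a b) →
      ContinuousOn (fun x => F x (φ x)) (Set.Icc a b) := fun φ h => by
    have := hF.comp_continuousOn (continuousOn_id.prodMk h); exact this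
  have hcontf : ∀ φ : ℝ → ℝ, ContinuousOn φ (Set.Icc a b) →
      ContinuousOn (fun x => f x (φ x)) (Set.Icc a b) := fun φ h => by
    have := hf.comp_continuousOn (continuousOn_id.prodMk h); exact this
  -- generic interval integrability from ContinuousOn Icc
  have hII : ∀ g : ℝ → ℝ, ContinuousOn g (Set.Icc a b) →
      IntervalIntegrable g MeasureTheory.volume a b := by
    intro g hg
    exact (hIcc ▸ hg : ContinuousOn g (Set.uIcc a b)).intervalIntegrable
  -- key estimate
  have key : ∀ z ∈ S,
      (∫ x in a..b, (α / 2 * (D z x) ^ 2 + F x (z x)))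
        - (∫ x in a..b, (α / 2 * (D u x) ^ 2 + F x (u x)))
      = α / 2 * (∫ x in a..b, (D z x - D u x) ^ 2)
        + ∫ x in a..b, (F x (z x) - F x (u x) - f x (u x) * (z x - u x)) ∧
      |∫ x in a..b, (F x (z x) - F x (u x) - f x (u x) * (z x - u x))|
        ≤ L0 * c0 ^ 2 / 2 * ∫ x in a..b, (D z x - D u x) ^ 2 := by
    intro z hz
    have hcz := hcontφ z (hS z hz)
    have hcu := hcontφ u hu
    have hcDz := hcontD z (hS z hz)
    have hcDu := hcontD u hu
    have hR : ContinuousOn (fun x => F x (z x) - F x (u x) - f x (u x) * (z x - u x))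
        (Set.Icc a b) :=
      ((hcontF z hcz).sub (hcontF u hcu)).sub ((hcontf u hcu).mul (hcz.sub hcu))
    have hsq : ContinuousOn (fun x => (D z x - D u x) ^ 2) (Set.Icc a b) :=
      (hcDz.sub hcDu).pow 2
    have hELc : ContinuousOn
        (fun x => α * D u x * (D z x - D u x) + f x (u x) * (z x - u x)) (Set.Icc a b) :=
      ((continuousOn_const.mul hcDu).mul (hcDz.sub hcDu)).add
        ((hcontf u hcu).mul (hcz.sub hcu))
    constructor
    · have hsub : (∫ x in a..b, (α / 2 * (D z x) ^ 2 + F x (z x)))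
          - (∫ x in a..b, (α / 2 * (D u x) ^ 2 + F x (u x)))
          = ∫ x in a..b, ((α / 2 * (D z x) ^ 2 + F x (z x))
              - (α / 2 * (D u x) ^ 2 + F x (u x))) := by
        rw [intervalIntegral.integral_sub
          (hII (fun x => α / 2 * (D z x) ^ 2 + F x (z x)) ((continuousOn_const.mul (hcDz.pow 2)).add (hcontF z hcz)))
          (hII (fun x => α / 2 * (D u x) ^ 2 + F x (u x)) ((continuousOn_const.mul (hcDu.pow 2)).add (hcontF u hcu)))]
      rw [hsub]
      have hident : ∀ x, (α / 2 * (D z x) ^ 2 + F x (z x))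
            - (α / 2 * (D u x) ^ 2 + F x (u x))
          = (α * D u x * (D z x - D u x) + f x (u x) * (z x - u x))
            + (α / 2 * (D z x - D u x) ^ 2
              + (F x (z x) - F x (u x) - f x (u x) * (z x - u x))) := by
        intro x; ring
      rw [intervalIntegral.integral_congr (g := fun x =>
          (α * D u x * (D z x - D u x) + f x (u x) * (z x - u x))
            + (α / 2 * (D z x - D u x) ^ 2
              + (F x (z x) - F x (u x) - f x (u x) * (z x - u x))))
        (fun x _ => hident x)]
      rw [intervalIntegral.integral_add (hII _ hELc)
        (hII (fun x => α / 2 * (D z x - D u x) ^ 2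
              + (F x (z x) - F x (u x) - f x (u x) * (z x - u x))) ((continuousOn_const.mul hsq).add hR)),
        intervalIntegral.integral_add (hII (fun x => α / 2 * (D z x - D u x) ^ 2) (continuousOn_const.mul hsq)) (hII _ hR),
        hEL z hz, intervalIntegral.integral_const_mul]
      ring
    · calc |∫ x in a..b, (F x (z x) - F x (u x) - f x (u x) * (z x - u x))|
          ≤ ∫ x in a..b, |F x (z x) - F x (u x) - f x (u x) * (z x - u x)| :=
            intervalIntegral.abs_integral_le_integral_abs hab'
        _ ≤ ∫ x in a..b, L0 / 2 * (z x - u x) ^ 2 := by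
            apply intervalIntegral.integral_mono_on hab' (hII _ hR.abs)
              (hII _ (continuousOn_const.mul ((hcz.sub hcu).pow 2)))
            intro x _
            exact taylor_quad_bound L0 (F x) (f x)
              (hf.comp (Continuous.prodMk_right x)) (hFf x) (hLip x) (z x) (u x)
        _ = L0 / 2 * ∫ x in a..b, (z x - u x) ^ 2 := by
            rw [intervalIntegral.integral_const_mul]
        _ ≤ L0 * c0 ^ 2 / 2 * ∫ x in a..b, (D z x - D u x) ^ 2 := by
            have hP := hPoincare z hz
            have hnn : (0:ℝ) ≤ ∫ x in a..b, (z x - u x) ^ 2 :=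
              intervalIntegral.integral_nonneg hab' (fun x _ => sq_nonneg _)
            nlinarith [hP, hnn]
  obtain ⟨keyv, keyvR⟩ := key v hv
  obtain ⟨keyh, keyhR⟩ := key uh huh
  have hminv := hmin v hv
  set Iv := ∫ x in a..b, (D v x - D u x) ^ 2 with hIv
  set Ih := ∫ x in a..b, (D uh x - D u x) ^ 2 with hIh
  have hIvnn : 0 ≤ Iv := intervalIntegral.integral_nonneg hab' (fun x _ => sq_nonneg _)
  have hIhnn : 0 ≤ Ih := intervalIntegral.integral_nonneg hab' (fun x _ => sq_nonneg _)
  have habs1 := abs_le.mp keyvR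
  have habs2 := abs_le.mp keyhR
  -- flip squares in goal
  have hflip : ∀ g : ℝ → ℝ, (∫ x in a..b, (D u x - g x) ^ 2) = ∫ x in a..b, (g x - D u x) ^ 2 := by
    intro g
    exact intervalIntegral.integral_congr (fun x _ => by ring)
  rw [show derivWithin u (Set.Icc a b) = D u from rfl]
  rw [hflip (D uh), hflip (D v)]
  rw [div_mul_eq_mul_div, le_div_iff₀ hc1]
  nlinarith [habs1.1, habs1.2, habs2.1, habs2.2, hminv, keyv, keyh, hIvnn, hIhnn,
    mul_le_mul_of_nonneg_right hH1 hIhnn]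
end

section
/- Let ε > 0 and c ∈ ℝ, and define φ : ℝ → ℝ by φ(x) = tanh((x - c)/(√2·ε)). Then the Allen–Cahn free energy of φ over the whole real line equals 2√2/3: ∫_ℝ (ε/2·φ'(x)² + (1 - φ(x)²)²/(4ε)) dx = 2√2/3. -/
open Filter MeasureTheory Set Real Topology

lemma my_continuous_tanh : Continuous Real.tanh := by
  have : Real.tanh = fun x => Real.sinh x / Real.cosh x := funext Real.tanh_eq_sinh_div_cosh
  rw [this]
  exact Real.continuous_sinh.div Real.continuous_cosh (fun x => (Real.cosh_pos x).ne')

lemma my_hasDerivAt_tanh (x : ℝ) : HasDerivAt Real.tanh (1 - Real.tanh x ^ 2) x := by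
  have h := (Real.hasDerivAt_sinh x).div (Real.hasDerivAt_cosh x) (Real.cosh_pos x).ne'
  have hx := (Real.cosh_pos x).ne'
  have key : (Real.cosh x * Real.cosh x - Real.sinh x * Real.sinh x) / Real.cosh x ^ 2
      = 1 - Real.tanh x ^ 2 := by
    rw [Real.tanh_eq_sinh_div_cosh, div_pow]
    field_simp
  rw [key] at h
  have : (fun y => Real.sinh y / Real.cosh y) = Real.tanh :=
    funext fun y => (Real.tanh_eq_sinh_div_cosh y).symm
  rwa [show (Real.sinh / Real.cosh) = Real.tanh from this] at h

lemma my_tanh_eq (x : ℝ) :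
    Real.tanh x = (1 - Real.exp (-2 * x)) / (1 + Real.exp (-2 * x)) := by
  have h1 : (0:ℝ) < Real.exp x := Real.exp_pos x
  rw [Real.tanh_eq_sinh_div_cosh, Real.sinh_eq, Real.cosh_eq,
    show (-2:ℝ) * x = -x + -x by ring, Real.exp_add, Real.exp_neg]
  have h2 : (0:ℝ) < 1 + (Real.exp x)⁻¹ * (Real.exp x)⁻¹ := by positivity
  field_simp

lemma my_tendsto_tanh_atTop : Tendsto Real.tanh atTop (𝓝 1) := by
  have h : Tendsto (fun x : ℝ => Real.exp (-2 * x)) atTop (𝓝 0) := by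
    apply Real.tendsto_exp_atBot.comp
    have := tendsto_neg_atTop_atBot.comp
      (Filter.tendsto_id.const_mul_atTop (show (0:ℝ) < 2 by norm_num))
    exact this.congr fun x => by simp only [Function.comp, id]; ring
  have := ((tendsto_const_nhds (x := (1:ℝ))).sub h).div
    ((tendsto_const_nhds (x := (1:ℝ))).add h) (by norm_num)
  simp only [sub_zero, add_zero, div_one] at this
  exact this.congr fun x => (my_tanh_eq x).symm

lemma my_tendsto_tanh_atBot : Tendsto Real.tanh atBot (𝓝 (-1)) := by
  have h := (my_tendsto_tanh_atTop.comp tendsto_neg_atBot_atTop).neg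
  simp only [Function.comp] at h
  refine h.congr fun x => ?_
  rw [Real.tanh_neg, neg_neg]

/-- The Allen–Cahn free energy of the stationary tanh profile
`φ(x) = tanh((x - c)/(√2·ε))` over the whole real line equals `2√2/3`. -/
theorem tanh_profile_allen_cahn_energy
    (ε : ℝ) (hε : 0 < ε) (c : ℝ) :
    (∫ x : ℝ,
        (ε / 2 * (deriv (fun y : ℝ => Real.tanh ((y - c) / (Real.sqrt 2 * ε))) x) ^ 2
          + (1 - (Real.tanh ((x - c) / (Real.sqrt 2 * ε))) ^ 2) ^ 2 / (4 * ε)))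
      = 2 * Real.sqrt 2 / 3 := by
  have hs2 : (0:ℝ) < Real.sqrt 2 := Real.sqrt_pos.mpr (by norm_num)
  have hs2sq : Real.sqrt 2 ^ 2 = 2 := Real.sq_sqrt (by norm_num)
  set k : ℝ := Real.sqrt 2 * ε with hk
  have hk0 : 0 < k := mul_pos hs2 hε
  -- derivative of the inner affine map
  have hu : ∀ x : ℝ, HasDerivAt (fun y : ℝ => (y - c) / k) (1 / k) x := by
    intro x
    simpa using ((hasDerivAt_id x).sub_const c).div_const k
  -- derivative of the profile
  have hφ : ∀ x : ℝ, HasDerivAt (fun y : ℝ => Real.tanh ((y - c) / k))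
      ((1 - Real.tanh ((x - c) / k) ^ 2) * (1 / k)) x := fun x =>
    by have h := (my_hasDerivAt_tanh ((x - c) / k)).comp x (hu x); exact h
  set f' : ℝ → ℝ := fun x => (1 - Real.tanh ((x - c) / k) ^ 2) ^ 2 / (2 * ε) with hf'
  -- the integrand equals f'
  have hint : ∀ x : ℝ,
      ε / 2 * (deriv (fun y : ℝ => Real.tanh ((y - c) / k)) x) ^ 2
        + (1 - (Real.tanh ((x - c) / k)) ^ 2) ^ 2 / (4 * ε) = f' x := by
    intro x
    rw [(hφ x).deriv, hf']
    have hk2 : k ^ 2 = 2 * ε ^ 2 := by rw [hk, mul_pow, hs2sq]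
    field_simp
    rw [hk2]; ring
  -- the antiderivative
  set F : ℝ → ℝ := fun x => Real.sqrt 2 / 2 *
    (Real.tanh ((x - c) / k) - Real.tanh ((x - c) / k) ^ 3 / 3) with hF
  have hFderiv : ∀ x : ℝ, HasDerivAt F (f' x) x := by
    intro x
    set T := Real.tanh ((x - c) / k) with hT
    have h1 : HasDerivAt (fun y : ℝ => Real.tanh ((y - c) / k) ^ 3)
        (3 * T ^ 2 * ((1 - T ^ 2) * (1 / k))) x := by
      have := (hφ x).fun_pow 3
      simpa [hT] using this
    have h2 : HasDerivAt F
        (Real.sqrt 2 / 2 * ((1 - T ^ 2) * (1 / k) - 3 * T ^ 2 * ((1 - T ^ 2) * (1 / k)) / 3)) x :=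
      (((hφ x).sub (h1.div_const 3))).const_mul (Real.sqrt 2 / 2)
    convert h2 using 1
    rw [hf', hk]
    have h2e : Real.sqrt 2 * ε ≠ 0 := (mul_pos hs2 hε).ne'
    field_simp
    nlinarith [hs2sq, hs2, hε, sq_nonneg T]
  -- limits of F
  have hutop : Tendsto (fun x : ℝ => (x - c) / k) atTop atTop := by
    apply Tendsto.atTop_div_const hk0
    simpa [sub_eq_add_neg] using tendsto_atTop_add_const_right atTop (-c) (tendsto_id (α := ℝ))
  have hubot : Tendsto (fun x : ℝ => (x - c) / k) atBot atBot := by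
    apply Tendsto.atBot_div_const hk0
    simpa [sub_eq_add_neg] using tendsto_atBot_add_const_right atBot (-c) (tendsto_id (α := ℝ))
  have hTtop : Tendsto (fun x : ℝ => Real.tanh ((x - c) / k)) atTop (𝓝 1) :=
    my_tendsto_tanh_atTop.comp hutop
  have hTbot : Tendsto (fun x : ℝ => Real.tanh ((x - c) / k)) atBot (𝓝 (-1)) :=
    my_tendsto_tanh_atBot.comp hubot
  have hFtop : Tendsto F atTop (𝓝 (Real.sqrt 2 / 3)) := by
    have := (tendsto_const_nhds (x := Real.sqrt 2 / 2)
      (f := atTop (α := ℝ))).mul (hTtop.sub ((hTtop.pow 3).div_const 3))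
    convert this using 2
    norm_num
    ring
  have hFbot : Tendsto F atBot (𝓝 (-(Real.sqrt 2 / 3))) := by
    have := (tendsto_const_nhds (x := Real.sqrt 2 / 2)
      (f := atBot (α := ℝ))).mul (hTbot.sub ((hTbot.pow 3).div_const 3))
    convert this using 2
    norm_num
    ring
  -- continuity of f'
  have hf'cont : Continuous f' := by
    apply Continuous.div_const
    apply Continuous.pow
    apply Continuous.sub continuous_const
    exact (my_continuous_tanh.comp ((continuous_id.sub continuous_const).div_const k)).pow 2
  -- the AE cover
  have hacov : AECover (volume : Measure ℝ) atTop
      (fun n : ℕ => Ioc (-(n : ℝ)) (n : ℝ)) := by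
    apply aecover_Ioc
    · exact tendsto_neg_atBot_iff.mpr tendsto_natCast_atTop_atTop
    · exact tendsto_natCast_atTop_atTop
  have key : ∫ x : ℝ, f' x = 2 * Real.sqrt 2 / 3 := by
    apply hacov.integral_eq_of_tendsto_of_nonneg_ae
    · exact ae_of_all _ fun x => by positivity
    · exact fun n => hf'cont.integrableOn_Ioc
    · have heq : ∀ n : ℕ, ∫ x in Ioc (-(n:ℝ)) (n:ℝ), f' x = F n - F (-n) := by
        intro n
        have hle : (-(n:ℝ)) ≤ (n:ℝ) := by
          have : (0:ℝ) ≤ n := n.cast_nonneg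
          linarith
        rw [← intervalIntegral.integral_of_le hle]
        exact intervalIntegral.integral_eq_sub_of_hasDerivAt
          (fun x _ => hFderiv x) (hf'cont.intervalIntegrable _ _)
      have := (hFtop.comp tendsto_natCast_atTop_atTop).sub
        (hFbot.comp (tendsto_neg_atBot_iff.mpr tendsto_natCast_atTop_atTop))
      rw [sub_neg_eq_add] at this
      have h23 : Real.sqrt 2 / 3 + Real.sqrt 2 / 3 = 2 * Real.sqrt 2 / 3 := by ring
      rw [h23] at this
      exact (Filter.Tendsto.congr (fun n => (heq n).symm)) (by simpa using this)
  calc ∫ x : ℝ,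
        (ε / 2 * (deriv (fun y : ℝ => Real.tanh ((y - c) / (Real.sqrt 2 * ε))) x) ^ 2
          + (1 - (Real.tanh ((x - c) / (Real.sqrt 2 * ε))) ^ 2) ^ 2 / (4 * ε))
      = ∫ x : ℝ, f' x := by
        apply integral_congr_ae
        exact ae_of_all _ fun x => hint x
    _ = 2 * Real.sqrt 2 / 3 := key
end
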